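/- For every client i, every y ∈ ℝ^{d2} and all x1, x2 ∈ ℝ^{d1}, the surrogate hypergradient is M_f-Lipschitz in its first argument: ‖∇̄f_i(x1, y) − ∇̄f_i(x2, y)‖ ≤ M_f ‖x1 − x2‖. -/

import Mathlib

open scoped RealInnerProductSpace

noncomputable section

abbrev Vec (d : ℕ) := EuclideanSpace ℝ (Fin d)

namespace SHLaux

lemma le_sqrt_left (a b : ℝ) (ha : 0 ≤ a) : a ≤ Real.sqrt (a^2 + b^2) := by
  have h := Real.sqrt_le_sqrt (show a^2 ≤ a^2 + b^2 by nlinarith)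
  rwa [Real.sqrt_sq ha] at h

lemma le_sqrt_right (a b : ℝ) (hb : 0 ≤ b) : b ≤ Real.sqrt (a^2 + b^2) := by
  have h := Real.sqrt_le_sqrt (show b^2 ≤ a^2 + b^2 by nlinarith)
  rwa [Real.sqrt_sq hb] at h

lemma sqrt_zero_right (a : ℝ) (ha : 0 ≤ a) : Real.sqrt (a^2 + 0^2) = a := by
  simp [Real.sqrt_sq ha]

lemma sqrt_zero_left (a : ℝ) (ha : 0 ≤ a) : Real.sqrt (0^2 + a^2) = a := by
  simp [Real.sqrt_sq ha]

lemma grad_norm_le {d : ℕ} {φ : Vec d → ℝ} {gφ : Vec d} {y : Vec d} {C : ℝ} (hC : 0 ≤ C)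
    (h : HasGradientAt φ gφ y)
    (hlip : ∀ y1 y2, |φ y1 - φ y2| ≤ C * ‖y1 - y2‖) : ‖gφ‖ ≤ C := by
  have hlip' : LipschitzWith ⟨C, hC⟩ φ := LipschitzWith.of_dist_le_mul fun a b => by
    rw [Real.dist_eq, dist_eq_norm]; exact hlip a b
  have := h.hasFDerivAt.le_of_lipschitz hlip'
  rw [LinearIsometryEquiv.norm_map] at this
  exact this

lemma fderiv_norm_le_of_lip {d e : ℕ} {G : Vec d → Vec e} {D : Vec d →L[ℝ] Vec e}
    {x : Vec d} {C : ℝ} (hC : 0 ≤ C)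
    (h : HasFDerivAt G D x)
    (hlip : ∀ x1 x2, ‖G x1 - G x2‖ ≤ C * ‖x1 - x2‖) : ‖D‖ ≤ C := by
  have hlip' : LipschitzWith ⟨C, hC⟩ G := LipschitzWith.of_dist_le_mul fun a b => by
    rw [dist_eq_norm, dist_eq_norm]; exact hlip a b
  exact h.le_of_lipschitz hlip'

lemma coercive {d : ℕ} {G : Vec d → Vec d} {H : Vec d →L[ℝ] Vec d} {y : Vec d} {μ : ℝ}
    (hH : HasFDerivAt G H y)
    (hmono : ∀ y1 y2, μ * ‖y1 - y2‖^2 ≤ ⟪G y1 - G y2, y1 - y2⟫) :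
    ∀ v : Vec d, μ * ‖v‖^2 ≤ ⟪H v, v⟫ := by
  intro v
  have h1 : HasDerivAt (fun t : ℝ => y + t • v) v 0 := by
    simpa using ((hasDerivAt_id (0:ℝ)).smul_const v).const_add y
  have hH' : HasFDerivAt G H (y + (0:ℝ) • v) := by simpa using hH
  have hline : HasDerivAt (fun t : ℝ => G (y + t • v)) (H v) 0 := by
    exact hH'.comp_hasDerivAt 0 h1
  have hphi : HasDerivAt (fun t : ℝ => ⟪G (y + t • v), v⟫) ⟪H v, v⟫ 0 := by
    simpa using HasDerivAt.inner ℝ hline (hasDerivAt_const (0:ℝ) v)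
  have hslope : Filter.Tendsto (slope (fun t : ℝ => ⟪G (y + t • v), v⟫) 0)
      (nhdsWithin 0 (Set.Ioi 0)) (nhds ⟪H v, v⟫) := by
    exact (hasDerivAt_iff_tendsto_slope.mp hphi).mono_left
      (nhdsWithin_mono 0 (by intro t ht; exact ne_of_gt ht))
  refine ge_of_tendsto hslope ?_
  filter_upwards [self_mem_nhdsWithin] with t ht
  have ht0 : (0:ℝ) < t := ht
  have hm := hmono (y + t • v) y
  simp only [add_sub_cancel_left] at hm
  rw [norm_smul, real_inner_smul_right, Real.norm_eq_abs, abs_of_pos ht0] at hm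
  have hsl : slope (fun t : ℝ => ⟪G (y + t • v), v⟫) 0 t
      = (⟪G (y + t • v), v⟫ - ⟪G y, v⟫) / t := by
    simp [slope, div_eq_inv_mul]
  simp only [ge_iff_le, hsl, ← inner_sub_left]
  rw [le_div_iff₀ ht0]
  nlinarith [hm]

end SHLaux

set_option maxHeartbeats 2000000 in
open SHLaux in
theorem surrogate_hypergradient_lipschitz_in_x
    {d1 d2 N : ℕ} (hN : 0 < N)
    (f g : Fin N → Vec d1 → Vec d2 → ℝ)
    (μg lf0 lf1 lg1 lg2 : ℝ)
    (hμg : 0 < μg) (hlf0 : 0 ≤ lf0) (hlf1 : 0 ≤ lf1) (hlg1 : 0 ≤ lg1) (hlg2 : 0 ≤ lg2)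
    -- twice continuous differentiability of upper- and lower-level objectives
    (hf2 : ∀ i, ContDiff ℝ 2 (fun p : Vec d1 × Vec d2 => f i p.1 p.2))
    (hg2 : ∀ i, ContDiff ℝ 2 (fun p : Vec d1 × Vec d2 => g i p.1 p.2))
    -- partial gradients of g_i
    (gxg : Fin N → Vec d1 → Vec d2 → Vec d1)
    (gyg : Fin N → Vec d1 → Vec d2 → Vec d2)
    (hgxg : ∀ i x y, HasGradientAt (fun x' => g i x' y) (gxg i x y) x)
    (hgyg : ∀ i x y, HasGradientAt (fun y' => g i x y') (gyg i x y) y)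
    -- partial gradients of f_i
    (gxf : Fin N → Vec d1 → Vec d2 → Vec d1)
    (gyf : Fin N → Vec d1 → Vec d2 → Vec d2)
    (hgxf : ∀ i x y, HasGradientAt (fun x' => f i x' y) (gxf i x y) x)
    (hgyf : ∀ i x y, HasGradientAt (fun y' => f i x y') (gyf i x y) y)
    -- each g_i(x, ·) is μ_g-strongly convex in y (first-order characterization)
    (hsc : ∀ i x y1 y2, g i x y1 ≥ g i x y2 + ⟪gyg i x y2, y1 - y2⟫ + μg / 2 * ‖y1 - y2‖ ^ 2)
    -- f_i is l_{f,0}-Lipschitz (ℓ2 norm on the joint variable)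
    (hLf0 : ∀ i x1 y1 x2 y2, |f i x1 y1 - f i x2 y2|
      ≤ lf0 * Real.sqrt (‖x1 - x2‖ ^ 2 + ‖y1 - y2‖ ^ 2))
    -- ∇f_i is l_{f,1}-Lipschitz
    (hLf1 : ∀ i x1 y1 x2 y2,
      Real.sqrt (‖gxf i x1 y1 - gxf i x2 y2‖ ^ 2 + ‖gyf i x1 y1 - gyf i x2 y2‖ ^ 2)
        ≤ lf1 * Real.sqrt (‖x1 - x2‖ ^ 2 + ‖y1 - y2‖ ^ 2))
    -- ∇g_i is l_{g,1}-Lipschitz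
    (hLg1 : ∀ i x1 y1 x2 y2,
      Real.sqrt (‖gxg i x1 y1 - gxg i x2 y2‖ ^ 2 + ‖gyg i x1 y1 - gyg i x2 y2‖ ^ 2)
        ≤ lg1 * Real.sqrt (‖x1 - x2‖ ^ 2 + ‖y1 - y2‖ ^ 2))
    -- second derivative blocks of g_i and their l_{g,2}-Lipschitz continuity
    (Dxy : Fin N → Vec d1 → Vec d2 → (Vec d1 →L[ℝ] Vec d2))
    (Hyy : Fin N → Vec d1 → Vec d2 → (Vec d2 →L[ℝ] Vec d2))
    (hDxy : ∀ i x y, HasFDerivAt (fun x' => gyg i x' y) (Dxy i x y) x)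
    (hHyy : ∀ i x y, HasFDerivAt (fun y' => gyg i x y') (Hyy i x y) y)
    (hLg2xy : ∀ i x1 y1 x2 y2, ‖Dxy i x1 y1 - Dxy i x2 y2‖
      ≤ lg2 * Real.sqrt (‖x1 - x2‖ ^ 2 + ‖y1 - y2‖ ^ 2))
    (hLg2yy : ∀ i x1 y1 x2 y2, ‖Hyy i x1 y1 - Hyy i x2 y2‖
      ≤ lg2 * Real.sqrt (‖x1 - x2‖ ^ 2 + ‖y1 - y2‖ ^ 2))
    -- inverse of ∇²_{yy} g_i (well defined since ∇²_{yy} g_i ⪰ μ_g I)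
    (Hinv : Fin N → Vec d1 → Vec d2 → (Vec d2 →L[ℝ] Vec d2))
    (hHinv : ∀ i x y, (Hyy i x y).comp (Hinv i x y) = ContinuousLinearMap.id ℝ (Vec d2)
      ∧ (Hinv i x y).comp (Hyy i x y) = ContinuousLinearMap.id ℝ (Vec d2))
    -- the surrogate hypergradient of client i
    (barf : Fin N → Vec d1 → Vec d2 → Vec d1)
    (hbarf : ∀ i x y, barf i x y
      = gxf i x y - (ContinuousLinearMap.adjoint (Dxy i x y)) (Hinv i x y (gyf i x y)))
    -- the constant M_f
    (Mf : ℝ) (hMf : Mf = lf1 + lg1 * lf1 / μg + lf0 / μg * (lg2 + lg1 * lg2 / μg))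
    : ∀ (i : Fin N) (y : Vec d2) (x1 x2 : Vec d1),
      ‖barf i x1 y - barf i x2 y‖ ≤ Mf * ‖x1 - x2‖ := by
  intro i y x1 x2
  set s := ‖x1 - x2‖ with hs_def
  have hs : 0 ≤ s := norm_nonneg _
  -- strong monotonicity of gyg in y, for each fixed x
  have hmono : ∀ x (y1 y2 : Vec d2),
      μg * ‖y1 - y2‖^2 ≤ ⟪gyg i x y1 - gyg i x y2, y1 - y2⟫ := by
    intro x y1 y2
    have h1 := hsc i x y1 y2
    have h2 := hsc i x y2 y1
    have e1 : (y2 - y1 : Vec d2) = -(y1 - y2) := by abel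
    rw [e1, inner_neg_right, norm_neg] at h2
    rw [inner_sub_left]
    nlinarith [h1, h2]
  -- operator norm bound for Hinv
  have hHinv_norm : ∀ x, ‖Hinv i x y‖ ≤ μg⁻¹ := by
    intro x
    refine ContinuousLinearMap.opNorm_le_bound _ (by positivity) fun w => ?_
    set u := Hinv i x y w with hu
    have huw : Hyy i x y u = w := by
      have := ContinuousLinearMap.ext_iff.mp (hHinv i x y).1 w
      simpa using this
    have hco := coercive (hHyy i x y) (hmono x) u
    have hcs : ⟪Hyy i x y u, u⟫ ≤ ‖Hyy i x y u‖ * ‖u‖ := real_inner_le_norm _ _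
    rw [huw] at hcs
    rw [huw] at hco
    rcases eq_or_lt_of_le (norm_nonneg u) with h0 | h0
    · rw [← h0]; positivity
    · have hkey : μg * ‖u‖ ≤ ‖w‖ := by nlinarith [hco, hcs, h0]
      have : ‖u‖ ≤ μg⁻¹ * ‖w‖ := by
        rw [show ‖u‖ = μg⁻¹ * (μg * ‖u‖) by field_simp]
        exact mul_le_mul_of_nonneg_left hkey (by positivity)
      exact this
  -- Lipschitz bounds specialized to the x direction
  have hgxf_lip : ‖gxf i x1 y - gxf i x2 y‖ ≤ lf1 * s := by
    have h := hLf1 i x1 y x2 y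
    rw [sub_self, norm_zero] at h
    rw [sqrt_zero_right s hs] at h
    exact le_trans (le_sqrt_left _ _ (norm_nonneg _)) h
  have hgyf_lip : ‖gyf i x1 y - gyf i x2 y‖ ≤ lf1 * s := by
    have h := hLf1 i x1 y x2 y
    rw [sub_self, norm_zero] at h
    rw [sqrt_zero_right s hs] at h
    exact le_trans (le_sqrt_right _ _ (norm_nonneg _)) h
  have hv1 : ‖gyf i x1 y‖ ≤ lf0 := by
    refine grad_norm_le hlf0 (hgyf i x1 y) fun y1 y2 => ?_
    have h := hLf0 i x1 y1 x1 y2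
    rwa [sub_self, norm_zero, sqrt_zero_left _ (norm_nonneg _)] at h
  have hD2 : ‖Dxy i x2 y‖ ≤ lg1 := by
    refine fderiv_norm_le_of_lip hlg1 (hDxy i x2 y) fun a b => ?_
    have h := hLg1 i a y b y
    rw [sub_self, norm_zero, sqrt_zero_right _ (norm_nonneg _)] at h
    exact le_trans (le_sqrt_right _ _ (norm_nonneg _)) h
  have hDd : ‖Dxy i x1 y - Dxy i x2 y‖ ≤ lg2 * s := by
    have h := hLg2xy i x1 y x2 y
    rwa [sub_self, norm_zero, sqrt_zero_right s hs] at h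
  have hHyyd : ‖Hyy i x2 y - Hyy i x1 y‖ ≤ lg2 * s := by
    have h := hLg2yy i x2 y x1 y
    rw [sub_self, norm_zero, sqrt_zero_right _ (norm_nonneg _)] at h
    calc ‖Hyy i x2 y - Hyy i x1 y‖ ≤ lg2 * ‖x2 - x1‖ := h
      _ = lg2 * s := by rw [norm_sub_rev]
  -- difference of inverses
  have h12 : ∀ w, Hinv i x1 y (Hyy i x1 y w) = w := by
    intro w
    have := ContinuousLinearMap.ext_iff.mp (hHinv i x1 y).2 w
    simpa using this
  have h21 : ∀ w, Hyy i x2 y (Hinv i x2 y w) = w := by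
    intro w
    have := ContinuousLinearMap.ext_iff.mp (hHinv i x2 y).1 w
    simpa using this
  have key : Hinv i x1 y - Hinv i x2 y
      = ((Hinv i x1 y).comp ((Hyy i x2 y) - (Hyy i x1 y))).comp (Hinv i x2 y) := by
    ext w
    simp [ContinuousLinearMap.comp_apply, ContinuousLinearMap.sub_apply, map_sub,
      h21 w, h12 (Hinv i x2 y w)]
  have hHd : ‖Hinv i x1 y - Hinv i x2 y‖ ≤ μg⁻¹ * (lg2 * s) * μg⁻¹ := by
    rw [key]
    calc ‖((Hinv i x1 y).comp ((Hyy i x2 y) - (Hyy i x1 y))).comp (Hinv i x2 y)‖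
        ≤ ‖(Hinv i x1 y).comp ((Hyy i x2 y) - (Hyy i x1 y))‖ * ‖Hinv i x2 y‖ :=
          ContinuousLinearMap.opNorm_comp_le _ _
      _ ≤ (‖Hinv i x1 y‖ * ‖Hyy i x2 y - Hyy i x1 y‖) * ‖Hinv i x2 y‖ := by
          apply mul_le_mul_of_nonneg_right (ContinuousLinearMap.opNorm_comp_le _ _)
            (norm_nonneg _)
      _ ≤ (μg⁻¹ * (lg2 * s)) * μg⁻¹ := by
          apply mul_le_mul
          · exact mul_le_mul (hHinv_norm x1) hHyyd (norm_nonneg _) (by positivity)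
          · exact hHinv_norm x2
          · exact norm_nonneg _
          · positivity
  -- adjoints
  set a1 := ContinuousLinearMap.adjoint (Dxy i x1 y) with ha1
  set a2 := ContinuousLinearMap.adjoint (Dxy i x2 y) with ha2
  have hadj_sub : ‖a1 - a2‖ ≤ lg2 * s := by
    rw [ha1, ha2, ← map_sub, LinearIsometryEquiv.norm_map]
    exact hDd
  have hadj2 : ‖a2‖ ≤ lg1 := by
    rw [ha2, LinearIsometryEquiv.norm_map]
    exact hD2
  -- decomposition
  have hdecomp : barf i x1 y - barf i x2 y
      = (gxf i x1 y - gxf i x2 y)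
        - ((a1 - a2) (Hinv i x1 y (gyf i x1 y))
           + a2 ((Hinv i x1 y - Hinv i x2 y) (gyf i x1 y))
           + a2 (Hinv i x2 y (gyf i x1 y - gyf i x2 y))) := by
    rw [hbarf i x1 y, hbarf i x2 y]
    simp only [ContinuousLinearMap.sub_apply, map_sub, ← ha1, ← ha2]
    abel
  -- bounds on the three terms
  have hHv1 : ‖Hinv i x1 y (gyf i x1 y)‖ ≤ μg⁻¹ * lf0 := by
    refine le_trans (ContinuousLinearMap.le_opNorm _ _) ?_
    exact mul_le_mul (hHinv_norm x1) hv1 (norm_nonneg _) (by positivity)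
  have hT1 : ‖(a1 - a2) (Hinv i x1 y (gyf i x1 y))‖ ≤ (lg2 * s) * (μg⁻¹ * lf0) := by
    refine le_trans (ContinuousLinearMap.le_opNorm _ _) ?_
    exact mul_le_mul hadj_sub hHv1 (norm_nonneg _) (by positivity)
  have hT2 : ‖a2 ((Hinv i x1 y - Hinv i x2 y) (gyf i x1 y))‖
      ≤ lg1 * ((μg⁻¹ * (lg2 * s) * μg⁻¹) * lf0) := by
    refine le_trans (ContinuousLinearMap.le_opNorm _ _) ?_
    refine mul_le_mul hadj2 ?_ (norm_nonneg _) hlg1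
    refine le_trans (ContinuousLinearMap.le_opNorm _ _) ?_
    exact mul_le_mul hHd hv1 (norm_nonneg _) (by positivity)
  have hT3 : ‖a2 (Hinv i x2 y (gyf i x1 y - gyf i x2 y))‖
      ≤ lg1 * (μg⁻¹ * (lf1 * s)) := by
    refine le_trans (ContinuousLinearMap.le_opNorm _ _) ?_
    refine mul_le_mul hadj2 ?_ (norm_nonneg _) hlg1
    refine le_trans (ContinuousLinearMap.le_opNorm _ _) ?_
    exact mul_le_mul (hHinv_norm x2) hgyf_lip (norm_nonneg _) (by positivity)
  have htot : ‖barf i x1 y - barf i x2 y‖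
      ≤ lf1 * s + ((lg2 * s) * (μg⁻¹ * lf0)
          + lg1 * ((μg⁻¹ * (lg2 * s) * μg⁻¹) * lf0)
          + lg1 * (μg⁻¹ * (lf1 * s))) := by
    rw [hdecomp]
    refine le_trans (norm_sub_le _ _) ?_
    gcongr
    refine le_trans (norm_add_le _ _) ?_
    refine le_trans (add_le_add (norm_add_le _ _) hT3) ?_
    linarith [hT1, hT2]
  refine le_trans htot (le_of_eq ?_)
  rw [hMf]
  field_simp
  ring

end
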